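/- (Minimizer at a bid) Let V_1, ..., V_m be v-functions with data b_1, ..., b_m (each b_i = (b1_i, b2_i)). Then the problem min_{r ≥ 0} F(r) := ∑_{i=1}^m V_i(r, b_i) admits a solution r* with r* = b1_i for some i ∈ {1, ..., m}. -/

import Mathlib

open Finset

/-- A `v`-function with parameters `η`, `a3` and bids `(b1, b2)`. -/
noncomputable def vfun (η a3 b1 b2 r : ℝ) : ℝ :=
  if r ≤ b2 then -(η * a3 * b2)
  else if r ≤ b1 then -(η * a3 * r)
  else if r < (1 + η) * b1 then a3 * r - a3 * (1 + η) * b1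
  else 0

lemma vfun_left {η a3 b1 b2 x : ℝ} (hη : 0 < η) (ha3 : 0 < a3) (hx : x ≤ b1) :
    vfun η a3 b1 b2 x = min (-(η * a3 * b2)) (-(η * a3 * x)) := by
  have hp : 0 < η * a3 := mul_pos hη ha3
  unfold vfun
  split_ifs with h1
  · rw [min_eq_left]; nlinarith [mul_le_mul_of_nonneg_left h1 hp.le]
  · rw [min_eq_right]
    push_neg at h1
    nlinarith [mul_le_mul_of_nonneg_left h1.le hp.le]

lemma vfun_right {η a3 b1 b2 x : ℝ} (hη : 0 < η) (ha3 : 0 < a3) (hb2 : 0 ≤ b2)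
    (hle : b2 ≤ b1) (hx : b1 ≤ x) :
    vfun η a3 b1 b2 x = min (a3 * x - a3 * (1 + η) * b1) 0 := by
  have hb1 : 0 ≤ b1 := le_trans hb2 hle
  unfold vfun
  split_ifs with h1 h2 h3
  · have hx1 : x = b1 := le_antisymm (le_trans h1 hle) hx
    have hx2 : b2 = b1 := le_antisymm hle (hx1 ▸ h1)
    subst hx1
    rw [min_eq_left (by nlinarith [mul_nonneg (mul_nonneg ha3.le hη.le) hb1])]
    rw [hx2]; ring
  · have hx1 : x = b1 := le_antisymm h2 hx
    subst hx1
    rw [min_eq_left (by nlinarith [mul_nonneg (mul_nonneg ha3.le hη.le) hb1])]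
    ring
  · rw [min_eq_left (by nlinarith)]
  · push_neg at h3; rw [min_eq_right (by nlinarith)]

lemma min_comb (t : ℝ) (ht0 : 0 ≤ t) (ht1 : t ≤ 1) (A B C D X Y : ℝ)
    (hX : X = t * A + (1 - t) * B) (hY : Y = t * C + (1 - t) * D) :
    t * min A C + (1 - t) * min B D ≤ min X Y := by
  subst hX hY
  refine le_min ?_ ?_ <;>
    nlinarith [min_le_left A C, min_le_right A C, min_le_left B D, min_le_right B D]

/-- A sum of `v`-functions attains its minimum over `ℝ≥0` at one of the highest bids. -/
theorem sum_vfun_minimizer_at_bid (m : ℕ) (hm : 0 < m)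
    (η a3 b1 b2 : Fin m → ℝ)
    (hη : ∀ i, 0 < η i) (ha3 : ∀ i, 0 < a3 i)
    (h0 : ∀ i, 0 ≤ b2 i) (hle : ∀ i, b2 i ≤ b1 i) :
    ∃ i : Fin m, ∀ r ∈ Set.Ici (0 : ℝ),
      (∑ j, vfun (η j) (a3 j) (b1 j) (b2 j) (b1 i))
        ≤ ∑ j, vfun (η j) (a3 j) (b1 j) (b2 j) r := by
  set F : ℝ → ℝ := fun r => ∑ j, vfun (η j) (a3 j) (b1 j) (b2 j) r with hF
  -- the bid minimizing F among bids
  obtain ⟨i0, -, hi0⟩ := Finset.exists_min_image Finset.univ (fun i => F (b1 i))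
    ⟨⟨0, hm⟩, Finset.mem_univ _⟩
  refine ⟨i0, fun r hr => ?_⟩
  -- reduce to finding *some* bid index i with F (b1 i) ≤ F r
  suffices h : ∃ i : Fin m, F (b1 i) ≤ F r by
    obtain ⟨i, hi⟩ := h
    exact le_trans (hi0 i (Finset.mem_univ i)) hi
  by_cases hA : ∀ j, r ≤ b1 j
  · -- r left of all bids : use the minimal bid, F is nonincreasing there
    obtain ⟨i, -, hi⟩ := Finset.exists_min_image Finset.univ b1 ⟨⟨0, hm⟩, Finset.mem_univ _⟩
    refine ⟨i, Finset.sum_le_sum fun j _ => ?_⟩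
    rw [vfun_left (hη j) (ha3 j) (hi j (Finset.mem_univ j)),
        vfun_left (hη j) (ha3 j) (hA j)]
    exact min_le_min le_rfl (by nlinarith [mul_le_mul_of_nonneg_left (hA i) (mul_pos (hη j) (ha3 j)).le])
  · by_cases hB : ∀ j, b1 j ≤ r
    · -- r right of all bids : use the maximal bid, F is nondecreasing there
      obtain ⟨i, -, hi⟩ := Finset.exists_max_image Finset.univ b1 ⟨⟨0, hm⟩, Finset.mem_univ _⟩
      refine ⟨i, Finset.sum_le_sum fun j _ => ?_⟩
      rw [vfun_right (hη j) (ha3 j) (h0 j) (hle j) (hi j (Finset.mem_univ j)),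
          vfun_right (hη j) (ha3 j) (h0 j) (hle j) (hB j)]
      exact min_le_min (by nlinarith [mul_le_mul_of_nonneg_left (hB i) (ha3 j).le]) le_rfl
    · -- r strictly between bids
      push_neg at hA hB
      obtain ⟨jl, hjl⟩ := hA
      obtain ⟨ju, hju⟩ := hB
      have hsL : (Finset.univ.filter (fun j => b1 j ≤ r)).Nonempty :=
        ⟨jl, Finset.mem_filter.2 ⟨Finset.mem_univ _, le_of_lt hjl⟩⟩
      have hsU : (Finset.univ.filter (fun j => r ≤ b1 j)).Nonempty :=
        ⟨ju, Finset.mem_filter.2 ⟨Finset.mem_univ _, le_of_lt hju⟩⟩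
      obtain ⟨iL, hiLmem, hiL⟩ := Finset.exists_max_image _ b1 hsL
      obtain ⟨iU, hiUmem, hiU⟩ := Finset.exists_min_image _ b1 hsU
      have hLr : b1 iL ≤ r := (Finset.mem_filter.1 hiLmem).2
      have hrU : r ≤ b1 iU := (Finset.mem_filter.1 hiUmem).2
      -- every bid is ≤ L or ≥ U
      have hsplit : ∀ j, b1 j ≤ b1 iL ∨ b1 iU ≤ b1 j := by
        intro j
        rcases le_total (b1 j) r with h | h
        · exact Or.inl (hiL j (Finset.mem_filter.2 ⟨Finset.mem_univ _, h⟩))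
        · exact Or.inr (hiU j (Finset.mem_filter.2 ⟨Finset.mem_univ _, h⟩))
      rcases eq_or_lt_of_le hLr with hEq | hLlt
      · exact ⟨iL, by rw [hEq]⟩
      rcases eq_or_lt_of_le hrU with hEq | hUlt
      · exact ⟨iU, by rw [← hEq]⟩
      set L := b1 iL
      set U := b1 iU
      set t : ℝ := (U - r) / (U - L) with ht
      have hUL : 0 < U - L := by linarith
      have ht0 : 0 ≤ t := div_nonneg (by linarith) (le_of_lt hUL)
      have ht1 : t ≤ 1 := by
        rw [div_le_one hUL]; linarith
      have hrt : r = t * L + (1 - t) * U := by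
        rw [ht, div_mul_eq_mul_div, one_sub_div hUL.ne', div_mul_eq_mul_div, ← add_div,
          eq_div_iff hUL.ne']
        ring
      have key : ∀ j, t * vfun (η j) (a3 j) (b1 j) (b2 j) L
          + (1 - t) * vfun (η j) (a3 j) (b1 j) (b2 j) U
          ≤ vfun (η j) (a3 j) (b1 j) (b2 j) r := by
        intro j
        rcases hsplit j with h | h
        · -- b1 j ≤ L ≤ r, U : use right formula
          rw [vfun_right (hη j) (ha3 j) (h0 j) (hle j) h,
              vfun_right (hη j) (ha3 j) (h0 j) (hle j) (by linarith),
              vfun_right (hη j) (ha3 j) (h0 j) (hle j) (by linarith)]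
          exact min_comb t ht0 ht1 _ _ 0 0 _ _ (by rw [hrt]; ring) (by ring)
        · -- r, L ≤ U ≤ b1 j : use left formula
          rw [vfun_left (hη j) (ha3 j) (by linarith : L ≤ b1 j),
              vfun_left (hη j) (ha3 j) (by linarith : U ≤ b1 j),
              vfun_left (hη j) (ha3 j) (by linarith : r ≤ b1 j)]
          exact min_comb t ht0 ht1 _ _ _ _ _ _ (by ring) (by rw [hrt]; ring)
      have hsum : t * F L + (1 - t) * F U ≤ F r := by
        have := Finset.sum_le_sum (fun j (_ : j ∈ Finset.univ) => key j)
        simpa [hF, Finset.sum_add_distrib, Finset.mul_sum] using this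
      rcases le_total (F L) (F U) with h | h
      · refine ⟨iL, ?_⟩
        nlinarith
      · refine ⟨iU, ?_⟩
        nlinarith
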